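/- Let N ≥ 3. The set of ordered tuples μ₁ ≤ ⋯ ≤ μ_N satisfying the (1,0)-nonnegativity conditions (μ_α + μ_β ≥ 0 for all α < β) equals the set of 2-nonnegative tuples, i.e., the union over (λ₁,λ₂) ∈ Λ of the (λ₁,λ₂)-nonnegative tuples equals {μ : μ_α + μ_β ≥ 0 for all α < β}. -/

import Mathlib

/-- Membership in the parameter set Λ. -/
def InLambda (x y : ℝ) : Prop :=
  0 ≤ y ∧ y ≤ x ∧ x ≤ 1 ∧ 0 < 1 - (x + y) * y ∧ 1 - (x + y) * y ≤ x

/-- The (λ₁,λ₂)-nonnegativity conditions for a tuple. -/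
def IsLamNonneg {N : ℕ} (l1 l2 : ℝ) (μ : Fin N → ℝ) : Prop :=
  (∀ α β γ : Fin N, α < β → β < γ → 0 ≤ μ α + l1 * μ β + l2 * μ γ) ∧
  (∀ α β : Fin N, α < β → 0 ≤ l1 * μ α + (1 - (l1 + l2) * l2) * μ β)

theorem stmt_11 (N : ℕ) (hN : 3 ≤ N) (μ : Fin N → ℝ) (hmono : Monotone μ) :
    (∃ l1 l2 : ℝ, InLambda l1 l2 ∧ IsLamNonneg l1 l2 μ) ↔
    (∀ α β : Fin N, α < β → 0 ≤ μ α + μ β) := by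
  constructor
  · rintro ⟨l1, l2, ⟨h0y, hyx, hx1, hcpos, hcx⟩, ⟨_, h2⟩⟩ α β hab
    have hc := h2 α β hab
    set c := 1 - (l1 + l2) * l2 with hcdef
    rcases le_or_gt 0 (μ α) with hμ | hμ
    · have := hmono hab.le
      linarith
    · -- c * (μ α + μ β) ≥ (c - l1) * μ α ≥ 0
      nlinarith [mul_nonneg (neg_nonneg.mpr (sub_nonpos.mpr hcx)) (neg_nonneg.mpr hμ.le)]
  · intro h
    refine ⟨1, 0, ⟨le_refl 0, zero_le_one, le_refl 1, by norm_num, by norm_num⟩, ?_, ?_⟩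
    · intro α β γ hab _
      have := h α β hab
      linarith
    · intro α β hab
      have := h α β hab
      linarith
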